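/- Let (P_θ)_{θ∈Θ} be a statistical model on Ω and (Q_π)_{π∈Π} a statistical model on Θ (a para-Bayesian model), and for each π ∈ Π let T_π be the probability measure on Ω × Θ with T_π(A×B) = ∫_B P_θ(A) Q_π(dθ). If f : Ω × Θ → [0,∞] is measurable and ∫ f dT_π ≤ 1 for every π ∈ Π, then there exist a conditional e-function g w.r.t. (P_θ) and an e-function h w.r.t. (Q_π) such that for every π ∈ Π, f(ω,θ) = g(ω;θ)·h(θ) holds T_π-almost everywhere. Moreover one can take h(θ) = ∫ f(ω,θ) P_θ(dω) and g(ω;θ) = f(ω,θ)/h(θ) (with 0/0 := 0). -/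

import Mathlib

open MeasureTheory ProbabilityTheory
open scoped ENNReal

/-- para-Bayesian model given by Markov kernels `P : Θ → Ω` and
`Q : Γ → Θ`, with joint statistical model `T_π` on `Ω × Θ` (the swap-pushforward
of `(Q π) ⊗ₘ P`). If `f : Ω × Θ → [0,∞]` is measurable with `∫ f dT_π ≤ 1` for
every `π`, then there are a conditional e-function `g` w.r.t. `(P_θ)` and an
e-function `h` w.r.t. `(Q_π)` with `f = g·h` `T_π`-a.e. for every `π`; moreover
one can take `h(θ) = ∫ f(ω,θ) P_θ(dω)` and `g = f/h` (in `ℝ≥0∞`, `0/0 = 0`). -/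
theorem stmt10 {Ω Θ Γ : Type*} [MeasurableSpace Ω] [MeasurableSpace Θ] [MeasurableSpace Γ]
    (P : Kernel Θ Ω) [IsMarkovKernel P]
    (Q : Kernel Γ Θ) [IsMarkovKernel Q]
    (f : Ω × Θ → ℝ≥0∞) (hf : Measurable f)
    (hfe : ∀ π, ∫⁻ x, f x ∂(((Q π).compProd P).map Prod.swap) ≤ 1) :
    ∃ g : Ω × Θ → ℝ≥0∞, ∃ h : Θ → ℝ≥0∞,
      Measurable g ∧ (∀ θ, ∫⁻ ω, g (ω, θ) ∂(P θ) ≤ 1) ∧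
      Measurable h ∧ (∀ π, ∫⁻ θ, h θ ∂(Q π) ≤ 1) ∧
      (∀ π, ∀ᵐ x ∂(((Q π).compProd P).map Prod.swap), f x = g x * h x.2) ∧
      h = (fun θ => ∫⁻ ω, f (ω, θ) ∂(P θ)) ∧
      g = (fun x => f x / ∫⁻ ω, f (ω, x.2) ∂(P x.2)) := by
  set h : Θ → ℝ≥0∞ := fun θ => ∫⁻ ω, f (ω, θ) ∂(P θ) with hh
  set g : Ω × Θ → ℝ≥0∞ := fun x => f x / h x.2 with hg
  have hfswap : Measurable (fun p : Θ × Ω => f (p.2, p.1)) := hf.comp measurable_swap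
  have hmh : Measurable h := Measurable.lintegral_kernel_prod_right hfswap
  have hmg : Measurable g := hf.div (hmh.comp measurable_snd)
  -- the key integral identity
  have key : ∀ π, ∫⁻ x, f x ∂(((Q π).compProd P).map Prod.swap) = ∫⁻ θ, h θ ∂(Q π) := by
    intro π
    rw [lintegral_map hf measurable_swap]
    exact Measure.lintegral_compProd hfswap
  refine ⟨g, h, hmg, ?_, hmh, ?_, ?_, rfl, rfl⟩
  · intro θ
    rcases eq_or_ne (h θ) 0 with h0 | h0
    · have hfm : Measurable fun ω => f (ω, θ) := hf.comp (measurable_id.prodMk measurable_const)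
      have hgm : Measurable fun ω => g (ω, θ) := hmg.comp (measurable_id.prodMk measurable_const)
      have hf0 : ∀ᵐ ω ∂(P θ), f (ω, θ) = 0 := (lintegral_eq_zero_iff hfm).mp h0
      have : ∫⁻ ω, g (ω, θ) ∂(P θ) = 0 := by
        rw [lintegral_eq_zero_iff hgm]
        filter_upwards [hf0] with ω hω
        simp [hg, hω]
      simp [this]
    · rcases eq_or_ne (h θ) ∞ with htop | htop
      · have : ∫⁻ ω, g (ω, θ) ∂(P θ) = 0 := by
          simp [hg, htop, ENNReal.div_top]
        simp [this]
      · have : ∫⁻ ω, g (ω, θ) ∂(P θ) = h θ / h θ := by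
          simp only [hg, div_eq_mul_inv]
          rw [lintegral_mul_const' _ _ (by simpa using h0)]
        rw [this]
        exact ENNReal.div_self_le_one
  · intro π; rw [← key π]; exact hfe π
  · intro π
    have hmeas : MeasurableSet {x : Ω × Θ | f x = g x * h x.2} :=
      measurableSet_eq_fun hf (hmg.mul (hmh.comp measurable_snd))
    rw [ae_map_iff measurable_swap.aemeasurable hmeas]
    have htop : ∀ᵐ θ ∂(Q π), h θ ≠ ∞ := by
      refine ae_lt_top hmh ?_ |>.mono fun θ hθ => hθ.ne
      exact ((key π ▸ hfe π).trans_lt ENNReal.one_lt_top).ne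
    refine (Measure.ae_compProd_iff (p := fun x : Θ × Ω => f x.swap = g x.swap * h x.swap.2)
      (measurable_swap hmeas)).mpr ?_
    filter_upwards [htop] with θ hθtop
    rcases eq_or_ne (h θ) 0 with h0 | h0
    · have hfm : Measurable fun ω => f (ω, θ) := hf.comp (measurable_id.prodMk measurable_const)
      have hf0 : ∀ᵐ ω ∂(P θ), f (ω, θ) = 0 := (lintegral_eq_zero_iff hfm).mp h0
      filter_upwards [hf0] with ω hω
      simp [hg, hω]
    · filter_upwards with ω
      show f (ω, θ) = g (ω, θ) * h θ
      rw [hg]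
      exact (ENNReal.div_mul_cancel h0 hθtop).symm
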